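/- For each even h₀₂ < 0 scaling, consider the quartic Hamiltonian H₂(x,y) = (1/2)y² + 2Ax²y + (1/2)y³ + Bx⁴ + Ax²y² + (1/8)y⁴ with B > 2A². Then H₂ restricted to the curve y = φ(x) (where ∂H₂/∂y(x,φ(x)) = 0) satisfies H₂(x,φ(x)) = (B - 2A²)x⁴ + O(x⁵) with B - 2A² > 0; hence the origin is a nilpotent center of order 1 of the Hamiltonian system ẋ = (H₂)_y, ẏ = -(H₂)_x. -/

import Mathlib

/-- For `H₂(x,y) = (1/2)y² + 2Ax²y + (1/2)y³ + Bx⁴ + Ax²y² +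
(1/8)y⁴` with `B > 2A²`, and `φ(x) = O(x²)` the analytic solution of
`(H₂)_y(x,φ(x)) = 0`, one has `H₂(x,φ(x)) = (B - 2A²)x⁴ + O(x⁵)` with
`B - 2A² > 0`; hence the origin is a nilpotent center of order 1. -/
theorem stmt_10 (A B : ℝ) (hB : B > 2 * A ^ 2)
    (φ : ℝ → ℝ) (hφa : AnalyticAt ℝ φ 0)
    (hφ2 : φ =O[nhds 0] fun x : ℝ => x ^ 2)
    (hφ : ∀ᶠ x in nhds (0:ℝ),
      deriv (fun y => (1 / 2) * y ^ 2 + 2 * A * x ^ 2 * y + (1 / 2) * y ^ 3 +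
        B * x ^ 4 + A * x ^ 2 * y ^ 2 + (1 / 8) * y ^ 4) (φ x) = 0) :
    ((fun x : ℝ =>
        ((1 / 2) * (φ x) ^ 2 + 2 * A * x ^ 2 * (φ x) + (1 / 2) * (φ x) ^ 3 +
          B * x ^ 4 + A * x ^ 2 * (φ x) ^ 2 + (1 / 8) * (φ x) ^ 4)
          - (B - 2 * A ^ 2) * x ^ 4) =O[nhds 0] fun x : ℝ => x ^ 5) ∧
      0 < B - 2 * A ^ 2 := by
  have hone : ∀ᶠ x : ℝ in nhds 0, |x| ≤ 1 := by
    filter_upwards [Metric.closedBall_mem_nhds (0:ℝ) one_pos] with x hx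
    simpa [Real.dist_eq] using hx
  have hpow : ∀ m n : ℕ, n ≤ m →
      (fun x : ℝ => x ^ m) =O[nhds 0] fun x : ℝ => x ^ n := by
    intro m n h
    apply Asymptotics.IsBigO.of_bound 1
    filter_upwards [hone] with x hx
    simp only [norm_pow, Real.norm_eq_abs, one_mul]
    exact pow_le_pow_of_le_one (abs_nonneg x) hx h
  -- the stationarity equation
  have heq : ∀ᶠ x in nhds (0:ℝ),
      φ x + 2*A*x^2 = -((3/2)*(φ x)^2 + 2*A*(x^2*(φ x)) + (1/2)*(φ x)^3) := by
    filter_upwards [hφ] with x hx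
    have hd : HasDerivAt (fun y : ℝ => (1/2)*y^2 + 2*A*x^2*y + (1/2)*y^3 +
        B*x^4 + A*x^2*y^2 + (1/8)*y^4)
        (φ x + 2*A*x^2 + (3/2)*(φ x)^2 + 2*A*x^2*(φ x) + (1/2)*(φ x)^3) (φ x) := by
      set t := φ x with ht
      have h2 := hasDerivAt_pow 2 t
      have h3 := hasDerivAt_pow 3 t
      have h4 := hasDerivAt_pow 4 t
      have hid := hasDerivAt_id t
      have H := (((((h2.const_mul (1/2:ℝ)).add (hid.const_mul (2*A*x^2))).add
        (h3.const_mul (1/2:ℝ))).add_const (B*x^4)).add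
        (h2.const_mul (A*x^2))).add (h4.const_mul (1/8:ℝ))
      convert H using 1
      all_goals first | rfl | (push_cast; ring)
    rw [hd.deriv] at hx
    linarith [hx]
  -- basic asymptotics
  have hφsq : (fun x : ℝ => (φ x)^2) =O[nhds 0] fun x : ℝ => x^4 := by
    simpa [← pow_mul] using hφ2.pow 2
  have hφcube : (fun x : ℝ => (φ x)^3) =O[nhds 0] fun x : ℝ => x^6 := by
    simpa [← pow_mul] using hφ2.pow 3
  have hφ4 : (fun x : ℝ => (φ x)^4) =O[nhds 0] fun x : ℝ => x^8 := by
    simpa [← pow_mul] using hφ2.pow 4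
  have hx2φ : (fun x : ℝ => x^2 * φ x) =O[nhds 0] fun x : ℝ => x^4 := by
    have h := (Asymptotics.isBigO_refl (fun x : ℝ => x^2) (nhds 0)).mul hφ2
    rwa [show (fun x : ℝ => x^2 * x^2) = fun x : ℝ => x^4 from funext fun x => by ring] at h
  have hx2φsq : (fun x : ℝ => x^2 * (φ x)^2) =O[nhds 0] fun x : ℝ => x^6 := by
    have h := (Asymptotics.isBigO_refl (fun x : ℝ => x^2) (nhds 0)).mul hφsq
    rwa [show (fun x : ℝ => x^2 * x^4) = fun x : ℝ => x^6 from funext fun x => by ring] at h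
  -- ψ = φ + 2Ax² = O(x⁴)
  have hψ : (fun x : ℝ => φ x + 2*A*x^2) =O[nhds 0] fun x : ℝ => x^4 := by
    have hrhs : (fun x : ℝ => -((3/2)*(φ x)^2 + 2*A*(x^2*(φ x)) + (1/2)*(φ x)^3))
        =O[nhds 0] fun x : ℝ => x^4 := by
      have h1 := hφsq.const_mul_left (3/2 : ℝ)
      have h2 := hx2φ.const_mul_left (2*A : ℝ)
      have h3 := (hφcube.trans (hpow 6 4 (by norm_num))).const_mul_left (1/2 : ℝ)
      exact ((h1.add h2).add h3).neg_left
    exact (Filter.EventuallyEq.trans_isBigO (Filter.Eventually.mono heq fun x hx => hx) hrhs)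
  have hψsq : (fun x : ℝ => (φ x + 2*A*x^2)^2) =O[nhds 0] fun x : ℝ => x^8 := by
    simpa [← pow_mul] using hψ.pow 2
  refine ⟨?_, by linarith⟩
  have hfun : (fun x : ℝ =>
        ((1 / 2) * (φ x) ^ 2 + 2 * A * x ^ 2 * (φ x) + (1 / 2) * (φ x) ^ 3 +
          B * x ^ 4 + A * x ^ 2 * (φ x) ^ 2 + (1 / 8) * (φ x) ^ 4)
          - (B - 2 * A ^ 2) * x ^ 4)
      = fun x : ℝ => (1/2)*(φ x + 2*A*x^2)^2 + (1/2)*(φ x)^3 +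
          A*(x^2*(φ x)^2) + (1/8)*(φ x)^4 := by
    funext x; ring
  rw [hfun]
  have t1 := (hψsq.trans (hpow 8 5 (by norm_num))).const_mul_left (1/2 : ℝ)
  have t2 := (hφcube.trans (hpow 6 5 (by norm_num))).const_mul_left (1/2 : ℝ)
  have t3 := (hx2φsq.trans (hpow 6 5 (by norm_num))).const_mul_left (A : ℝ)
  have t4 := (hφ4.trans (hpow 8 5 (by norm_num))).const_mul_left (1/8 : ℝ)
  exact ((t1.add t2).add t3).add t4
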